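/- For every small category C there is an isomorphism of simplicial sets between the nerve of the category Σ_{A ∈ C} Under(A) (the sigma category over the objects A of C of the under-categories; this is the décalage category Dec⁰(C), whose objects are the morphisms of C and whose morphisms f → g ∘ f are given by postcomposition) and Dec⁰(N C), the décalage of the nerve of C. The isomorphism sends an n-simplex of the nerve of Σ_{A ∈ C} Under(A) — a chain (A → B₀) → (A → B₁) → ⋯ → (A → B_n) of objects under a fixed A, with connecting morphisms h_t : B_{t−1} → B_t — to the composable chain A → B₀ → B₁ → ⋯ → B_n, an (n+1)-simplex of N C; these isomorphisms are natural in C. -/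

import Mathlib

open CategoryTheory Simplicial Opposite

universe u

/-- The morphism `σ(α) : [k+1] ⟶ [n+1]` with `σ(α)(0) = 0` and `σ(α)(i+1) = α(i) + 1`,
used to define the décalage. -/
def coneHom {a b : SimplexCategory} (α : a ⟶ b) :
    (⦋a.len + 1⦌ : SimplexCategory) ⟶ ⦋b.len + 1⦌ :=
  SimplexCategory.Hom.mk
    { toFun := Fin.cases 0 fun i => (α.toOrderHom i).succ
      monotone' := by
        intro x y hxy
        induction x using Fin.cases with
        | zero => simp only [Fin.cases_zero]; exact Fin.zero_le _
        | succ i =>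
          induction y using Fin.cases with
          | zero => exact absurd (Fin.le_zero_iff.mp hxy) (Fin.succ_ne_zero i)
          | succ j =>
            simp only [Fin.cases_succ]
            exact Fin.succ_le_succ_iff.mpr
              (α.toOrderHom.monotone (Fin.succ_le_succ_iff.mp hxy)) }

lemma coneHom_id (a : SimplexCategory) :
    coneHom (𝟙 a) = 𝟙 (⦋a.len + 1⦌ : SimplexCategory) := by
  apply SimplexCategory.Hom.ext
  ext i
  induction i using Fin.cases with
  | zero => simp [coneHom]
  | succ i => simp [coneHom]

lemma coneHom_comp {a b c : SimplexCategory} (α : a ⟶ b) (β : b ⟶ c) :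
    coneHom (α ≫ β) = coneHom α ≫ coneHom β := by
  apply SimplexCategory.Hom.ext
  ext i
  induction i using Fin.cases with
  | zero => simp [coneHom]; rfl
  | succ i => simp [coneHom]; rfl

/-- The décalage of a simplicial set: `Dec⁰(Y)_n = Y_{n+1}`, with `α : [k] ⟶ [n]` acting
as `Y(σ(α))`. -/
def Dec0 (Y : SSet.{u}) : SSet.{u} where
  obj U := Y.obj (op ⦋U.unop.len + 1⦌)
  map α := Y.map (coneHom α.unop).op
  map_id U := by
    show Y.map (coneHom (𝟙 U.unop)).op = _
    rw [coneHom_id, op_id, Y.map_id]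
  map_comp {U V W} α β := by
    show Y.map (coneHom (β.unop ≫ α.unop)).op = _
    rw [coneHom_comp, op_comp, Y.map_comp]

/-- Functoriality of the décalage. -/
def Dec0map {Y Z : SSet.{u}} (g : Y ⟶ Z) : Dec0 Y ⟶ Dec0 Z where
  app U := g.app (op ⦋U.unop.len + 1⦌)
  naturality U V α := g.naturality (coneHom α.unop).op

/-- The map of nerves induced by a functor. -/
def nerveMap {C D : Type u} [SmallCategory C] [SmallCategory D] (G : C ⥤ D) :
    nerve C ⟶ nerve D where
  app U := ↾fun s => s ⋙ G
  naturality U V α := rfl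

/-- The functor `Σ_{A ∈ C} Under(A) ⥤ C` remembering the target object. -/
def underRight (C : Type u) [SmallCategory C] : (Σ A : C, Under A) ⥤ C :=
  CategoryTheory.Sigma.desc fun A => Under.forget A

/-- The functor between sigma categories of under-categories induced by a functor. -/
def sigmaUnderMap {C D : Type u} [SmallCategory C] [SmallCategory D] (G : C ⥤ D) :
    (Σ A : C, Under A) ⥤ Σ A : D, Under A :=
  CategoryTheory.Sigma.desc fun A => Under.post G ⋙ CategoryTheory.Sigma.incl (G.obj A)


/-- An `n`-simplex of `Dec⁰(N C)` is an `(n+1)`-simplex of `N C`, i.e. a composable chain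
of `n+1` morphisms in `C`. -/
def toChain {C : Type u} [SmallCategory C] {n : ℕ} (t : (Dec0 (nerve C)).obj (op ⦋n⦌)) :
    ComposableArrows C (n + 1) := t

section AuxProof

variable {C : Type u} [SmallCategory C]

/-- Auxiliary: the object of the sigma category attached to an inequality in a chain. -/
def dObj {m : ℕ} (t : ComposableArrows C m) (z a : Fin (m + 1)) (h : z ≤ a) :
    Σ A : C, Under A :=
  ⟨t.obj z, Under.mk (t.map (homOfLE h))⟩

/-- Auxiliary: the morphism of the sigma category attached to inequalities in a chain. -/
def dMap {m : ℕ} (t : ComposableArrows C m) (z a b : Fin (m + 1)) (hza : z ≤ a) (hab : a ≤ b) :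
    dObj t z a hza ⟶ dObj t z b (hza.trans hab) :=
  Sigma.SigmaHom.mk
    (Under.homMk (t.map (homOfLE hab)) (by
      show t.map _ ≫ t.map _ = t.map _
      rw [← t.map_comp]
      rfl))

/-- The inverse construction: an `(n+1)`-chain in `C` gives an `n`-chain in the sigma
category of under-categories. -/
def decObj {n : ℕ} (t : ComposableArrows C (n + 1)) :
    ComposableArrows (Σ A : C, Under A) n where
  obj i := dObj t 0 i.succ (Fin.zero_le _)
  map {i j} f := dMap t 0 i.succ j.succ (Fin.zero_le _) (Fin.succ_le_succ_iff.mpr (leOfHom f))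
  map_id i := by
    show Sigma.SigmaHom.mk _ = Sigma.SigmaHom.mk (𝟙 _)
    congr 1
    apply StructuredArrow.hom_ext
    show t.map (homOfLE _) = 𝟙 _
    rw [show homOfLE _ = 𝟙 i.succ from rfl, t.map_id]
  map_comp {i j k} f g := by
    show Sigma.SigmaHom.mk _ = Sigma.SigmaHom.mk _
    congr 1
    apply StructuredArrow.hom_ext
    show t.map (homOfLE _) = t.map (homOfLE _) ≫ t.map (homOfLE _)
    rw [← t.map_comp]
    rfl

/-- The forward construction: an `n`-chain in the sigma category gives an `(n+1)`-chain
in `C`. -/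
def cChain {n : ℕ} (s : ComposableArrows (Σ A : C, Under A) n) : ComposableArrows C (n + 1) :=
  ComposableArrows.precomp (s ⋙ underRight C) (X := (s.obj 0).1) ((s.obj 0).2.hom)

lemma cChain_map_zero {n : ℕ} (s : ComposableArrows (Σ A : C, Under A) n) (i : Fin (n + 1)) :
    (cChain s).map (homOfLE (Fin.zero_le i.succ)) =
      (s.obj 0).2.hom ≫ (underRight C).map (s.map (homOfLE (Fin.zero_le i))) := by
  obtain ⟨i, hi⟩ := i
  cases i with
  | zero =>
      show (s.obj 0).2.hom = _
      have h0 : s.map (homOfLE (Fin.zero_le (⟨0, hi⟩ : Fin (n + 1)))) = 𝟙 _ := s.map_id 0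
      rw [h0]
      exact (Category.comp_id _).symm.trans
        (congrArg (fun x => (s.obj 0).2.hom ≫ x) ((underRight C).map_id _).symm)
  | succ j => rfl

lemma sigma_obj_eq {X Y : Σ A : C, Under A} (g : X ⟶ Y) :
    Y = ⟨X.1, Under.mk (X.2.hom ≫ (underRight C).map g)⟩ := by
  change Sigma.SigmaHom X Y at g
  cases g with
  | mk f =>
      show _ = (⟨_, Under.mk (_ ≫ f.right)⟩ : Σ A : C, Under A)
      rw [Under.w f]
      exact congrArg _ (StructuredArrow.eq_mk _)

lemma sigma_eqToHom {A : C} {U V : Under A} (h : U = V)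
    (h' : (⟨A, U⟩ : Σ A : C, Under A) = ⟨A, V⟩) :
    eqToHom h' = Sigma.SigmaHom.mk (eqToHom h) := by
  subst h
  rfl

lemma keyB {X Y Z : Σ A : C, Under A} (p : X ⟶ Y) (g : Y ⟶ Z) (q : X ⟶ Z) (hq : p ≫ g = q)
    {u : X.1 ⟶ (underRight C).obj Y} {w : X.1 ⟶ (underRight C).obj Z}
    (hu : u = X.2.hom ≫ (underRight C).map p) (hw : w = X.2.hom ≫ (underRight C).map q)
    (pf : (Under.mk u).hom ≫ (underRight C).map g = (Under.mk w).hom) :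
    HEq (Sigma.SigmaHom.mk
      (Under.homMk (U := Under.mk u) (V := Under.mk w) ((underRight C).map g) pf)) g := by
  subst hq hu hw
  change Sigma.SigmaHom X Y at p
  cases p with
  | mk f =>
      change Sigma.SigmaHom _ _ at g
      cases g with
      | mk v =>
          rename_i A U V W
          have e1 : Under.mk (U.hom ≫ (underRight C).map (Sigma.SigmaHom.mk f)) = V := by
            show Under.mk (U.hom ≫ f.right) = V
            rw [Under.w f]
            exact (StructuredArrow.eq_mk V).symm
          have e2 : Under.mk (U.hom ≫
              (underRight C).map (Sigma.SigmaHom.mk f ≫ Sigma.SigmaHom.mk v)) = W := by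
            show Under.mk (U.hom ≫ f.right ≫ v.right) = W
            have hVhom : V.hom = U.hom ≫ f.right := by
              exact (Under.w f).symm
            rw [← Category.assoc, ← hVhom, Under.w v]
            exact (StructuredArrow.eq_mk W).symm
          rw [← conj_eqToHom_iff_heq _ _ (congrArg (Sigma.mk A) e1) (congrArg (Sigma.mk A) e2)]
          rw [sigma_eqToHom e1 (congrArg (Sigma.mk A) e1),
            sigma_eqToHom e2.symm (congrArg (Sigma.mk A) e2).symm]
          show Sigma.SigmaHom.mk _ = Sigma.SigmaHom.mk (eqToHom e1 ≫ v ≫ eqToHom e2.symm)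
          congr 1
          apply StructuredArrow.hom_ext
          show v.right = (eqToHom e1 ≫ v ≫ eqToHom e2.symm).right
          simp
          change v.right = eqToHom (rfl : V.right = V.right) ≫ v.right ≫ eqToHom (rfl : W.right = W.right)
          simp

lemma decObj_cChain {n : ℕ} (s : ComposableArrows (Σ A : C, Under A) n) :
    decObj (cChain s) = s := by
  have hobj : ∀ i : Fin (n + 1), (decObj (cChain s)).obj i = s.obj i := by
    intro i
    rw [sigma_obj_eq (s.map (homOfLE (Fin.zero_le i)))]
    show (⟨(s.obj 0).1,
      Under.mk ((cChain s).map (homOfLE (Fin.zero_le i.succ)))⟩ : Σ A : C, Under A) = _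
    rw [cChain_map_zero]
    rfl
  refine ComposableArrows.ext hobj (fun i hi =>
    (conj_eqToHom_iff_heq _ _ (hobj _) (hobj _)).mpr ?_)
  exact keyB (s.map (homOfLE (Fin.zero_le ⟨i, by omega⟩)))
    (s.map' i (i + 1)) (s.map (homOfLE (Fin.zero_le ⟨i + 1, by omega⟩)))
    (by rw [← s.map_comp]; rfl)
    (cChain_map_zero s ⟨i, by omega⟩) (cChain_map_zero s ⟨i + 1, by omega⟩) _

lemma cChain_decObj {n : ℕ} (t : ComposableArrows C (n + 1)) : cChain (decObj t) = t := by
  have hobj : ∀ i : Fin (n + 1 + 1), (cChain (decObj t)).obj i = t.obj i := fun i =>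
    match i with
    | ⟨0, _⟩ => rfl
    | ⟨j + 1, _⟩ => rfl
  refine ComposableArrows.ext hobj (fun i hi =>
    (conj_eqToHom_iff_heq _ _ (hobj _) (hobj _)).mpr ?_)
  match i, hi with
  | 0, _ => exact heq_of_eq rfl
  | (i + 1), _ => exact heq_of_eq rfl

end AuxProof

/-- The natural isomorphism, as a map `Dec0 (nerve C) ≅ nerve (Σ A, Under A)`. -/
def theIso (C : Type u) [SmallCategory C] :
    Dec0 (nerve C) ≅ nerve (Σ A : C, Under A) :=
  NatIso.ofComponents
    (fun U => Equiv.toIso ⟨decObj (n := U.unop.len), cChain, cChain_decObj, decObj_cChain⟩)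
    (fun {U V} α => by
      ext t
      rfl)


/-- Proposition 4.4: for every small category `C` there is an isomorphism of simplicial
sets `N(Dec⁰ C) = N(Σ_{A ∈ C} Under A) ≅ Dec⁰(N C)`, sending a chain
`(A → B₀) → (A → B₁) → ⋯ → (A → B_n)` of objects under `A` to the composable chain
`A → B₀ → B₁ → ⋯ → B_n`, naturally in `C`. -/
theorem stmt10 :
    ∃ iso : ∀ (C : Type u) [SmallCategory C], nerve (Σ A : C, Under A) ≅ Dec0 (nerve C),
      (∀ (C : Type u) [SmallCategory C] (n : ℕ) (s : nerve (Σ A : C, Under A) _⦋n⦌),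
        ((toChain ((iso C).hom.app (op ⦋n⦌) s)).obj 0 = (s.obj 0).1) ∧
        (∀ i : Fin (n + 1),
          (toChain ((iso C).hom.app (op ⦋n⦌) s)).obj i.succ
            = ((s.obj i).2).right) ∧
        ((toChain ((iso C).hom.app (op ⦋n⦌) s)).δ₀
            = s ⋙ underRight C) ∧
        HEq ((toChain ((iso C).hom.app (op ⦋n⦌) s)).map' 0 1 (by omega) (by omega))
          ((s.obj 0).2).hom) ∧
      (∀ (C D : Type u) [SmallCategory C] [SmallCategory D] (G : C ⥤ D),
        _root_.nerveMap (sigmaUnderMap G) ≫ (iso D).hom = (iso C).hom ≫ Dec0map (_root_.nerveMap G)) := by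
  refine ⟨fun C _ => (theIso C).symm, fun C _ n s => ⟨rfl, fun i => rfl, rfl, HEq.rfl⟩,
    fun C D _ _ G => ?_⟩
  have hnat : Dec0map (_root_.nerveMap G) ≫ (theIso D).hom =
      (theIso C).hom ≫ _root_.nerveMap (sigmaUnderMap G) := by
    apply NatTrans.ext
    funext U
    ext t
    rfl
  show _root_.nerveMap (sigmaUnderMap G) ≫ (theIso D).inv = (theIso C).inv ≫ Dec0map (_root_.nerveMap G)
  rw [Iso.eq_inv_comp, ← Category.assoc, ← hnat, Category.assoc, Iso.hom_inv_id,
    Category.comp_id]
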